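/- arXiv:1703.06056 — 2 statements merged into one kernel-verified Lean document; each statement's English description precedes it below -/
import Mathlib

section
/- Let s > 0 and let K ⊂ ℝ^d be compact with ℋ^s(K) < +∞, where ℋ^s is the s-dimensional Hausdorff measure. Then the Riesz capacity of order s of K is zero: cap_s(K) = 0. -/
open MeasureTheory Filter
open scoped ENNReal NNReal Topology

noncomputable section

/-- The Riesz kernel of order `s ≥ 0`: `|x|^{-s}` for `s > 0` and `(-log|x|)₊` for `s = 0`. -/
def rieszKernel (d : ℕ) (s : ℝ) (x : EuclideanSpace ℝ (Fin d)) : ℝ≥0∞ :=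
  if s = 0 then ENNReal.ofReal (max (-Real.log ‖x‖) 0)
  else (ENNReal.ofReal ‖x‖) ^ (-s)

/-- The Riesz energy of order `s` of a measure `μ`:
`I_s μ = ∬ |x−y|^{-s} μ(dy) μ(dx)` (logarithmic kernel if `s = 0`). -/
def rieszEnergy (d : ℕ) (s : ℝ) (μ : Measure (EuclideanSpace ℝ (Fin d))) : ℝ≥0∞ :=
  ∫⁻ x, ∫⁻ y, rieszKernel d s (x - y) ∂μ ∂μ

/-- The Riesz capacity of order `s` of a set `E`:
`cap_s(E) = [inf {I_s(μ) : μ Borel probability measure on E}]⁻¹`, with `1/∞ = 0`. -/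
def rieszCapacity (d : ℕ) (s : ℝ) (E : Set (EuclideanSpace ℝ (Fin d))) : ℝ≥0∞ :=
  (⨅ (μ : Measure (EuclideanSpace ℝ (Fin d))) (_ : IsProbabilityMeasure μ) (_ : μ Eᶜ = 0),
    rieszEnergy d s μ)⁻¹

section Aux

variable {d : ℕ} {s : ℝ}

/-- If a probability measure is carried by a set of finite `s`-dimensional Hausdorff measure,
then its Riesz energy of order `s > 0` is infinite. -/
theorem riesz_energy_eq_top_aux (d : ℕ) (s : ℝ) (hs : 0 < s)
    (K : Set (EuclideanSpace ℝ (Fin d))) (h : μH[s] K < ∞)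
    (μ : Measure (EuclideanSpace ℝ (Fin d))) (hprob : IsProbabilityMeasure μ)
    (hμK : μ Kᶜ = 0) : rieszEnergy d s μ = ∞ := by
  by_contra hE
  set k : EuclideanSpace ℝ (Fin d) → ℝ≥0∞ := fun v => (ENNReal.ofReal ‖v‖) ^ (-s) with hk_def
  have hkr : ∀ v, rieszKernel d s v = k v := fun v => if_neg hs.ne'
  have hk_meas : Measurable k :=
    (ENNReal.continuous_rpow_const.comp
      (ENNReal.continuous_ofReal.comp continuous_norm)).measurable
  set f : EuclideanSpace ℝ (Fin d) → ℝ≥0∞ := fun x => ∫⁻ y, k (x - y) ∂μ with hf_def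
  have hf_meas : Measurable f :=
    Measurable.lintegral_prod_right' (hk_meas.comp (measurable_fst.sub measurable_snd))
  have hfE : ∫⁻ x, f x ∂μ ≠ ∞ := by
    simp only [rieszEnergy, hkr] at hE
    exact hE
  -- the kernel blows up at the origin
  have hk0 : k 0 = ∞ := by
    simp only [hk_def, norm_zero, ENNReal.ofReal_zero]
    exact ENNReal.zero_rpow_of_neg (neg_neg_iff_pos.mpr hs)
  -- points of finite potential are not atoms
  have hsing : ∀ x : EuclideanSpace ℝ (Fin d), f x < ∞ → μ {x} = 0 := by
    intro x hx
    by_contra hne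
    have htop : (∞ : ℝ≥0∞) ≤ f x := by
      calc (∞ : ℝ≥0∞) = k (x - x) * μ {x} := by
            rw [sub_self, hk0, ENNReal.top_mul hne]
        _ = ∫⁻ y in {x}, k (x - y) ∂μ := (lintegral_singleton (fun y => k (x - y)) x).symm
        _ ≤ f x := setLIntegral_le_lintegral _ _
    exact (htop.trans_lt hx).false
  -- the set carrying the measure
  set A : Set (EuclideanSpace ℝ (Fin d)) := {x | f x < ∞} ∩ K with hA_def
  have hA1 : μ A = 1 := by
    have h1 : μ {x | f x < ∞}ᶜ = 0 := by
      have h2 := ae_lt_top hf_meas hfE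
      simpa only [ae_iff, not_lt, top_le_iff, Set.compl_setOf] using h2
    have hAc : μ Aᶜ = 0 := by
      rw [hA_def, Set.compl_inter]
      exact le_antisymm ((measure_union_le _ _).trans (by simp [h1, hμK])) zero_le
    refine le_antisymm prob_le_one ?_
    calc (1 : ℝ≥0∞) = μ Set.univ := (measure_univ (μ := μ)).symm
      _ ≤ μ A + μ Aᶜ := by
          rw [← Set.union_compl_self A]; exact measure_union_le _ _
      _ = μ A := by rw [hAc, add_zero]
  -- the basic potential-theoretic estimate
  have fact1 : ∀ (x : EuclideanSpace ℝ (Fin d)) (r : ℝ), 0 < r →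
      μ (Metric.closedBall x r) ≤
        ENNReal.ofReal r ^ s * ∫⁻ y in Metric.closedBall x r, k (x - y) ∂μ := by
    intro x r hr
    set a := ENNReal.ofReal r with ha_def
    have ha0 : a ≠ 0 := (ENNReal.ofReal_pos.mpr hr).ne'
    have hat : a ≠ ∞ := ENNReal.ofReal_ne_top
    have has0 : a ^ s ≠ 0 := (ENNReal.rpow_pos (ENNReal.ofReal_pos.mpr hr) hat).ne'
    have hast : a ^ s ≠ ∞ := ENNReal.rpow_ne_top_of_nonneg hs.le hat
    have hle : a ^ (-s) * μ (Metric.closedBall x r)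
        ≤ ∫⁻ y in Metric.closedBall x r, k (x - y) ∂μ := by
      rw [← setLIntegral_const]
      refine setLIntegral_mono' measurableSet_closedBall fun y hy => ?_
      rw [hk_def]
      simp only []
      rw [ENNReal.rpow_neg, ENNReal.rpow_neg]
      refine ENNReal.inv_le_inv.mpr ?_
      refine ENNReal.rpow_le_rpow (ENNReal.ofReal_le_ofReal ?_) hs.le
      have : dist y x ≤ r := Metric.mem_closedBall.mp hy
      calc ‖x - y‖ = dist x y := (dist_eq_norm _ _).symm
        _ = dist y x := dist_comm _ _
        _ ≤ r := this
    calc μ (Metric.closedBall x r)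
        = a ^ s * (a ^ (-s) * μ (Metric.closedBall x r)) := by
          rw [← mul_assoc, ENNReal.rpow_neg, ENNReal.mul_inv_cancel has0 hast, one_mul]
      _ ≤ a ^ s * ∫⁻ y in Metric.closedBall x r, k (x - y) ∂μ := mul_le_mul_right hle _
  -- choose the small constant ε
  set H := μH[s] K with hH_def
  have hHtop : H + 1 ≠ ∞ := ENNReal.add_ne_top.mpr ⟨h.ne, ENNReal.one_ne_top⟩
  have hH0 : H + 1 ≠ 0 := by simp
  set ε : ℝ≥0∞ := (2 * (H + 1))⁻¹ with hε_def
  have hεpos : 0 < ε := ENNReal.inv_pos.mpr (ENNReal.mul_ne_top (by norm_num) hHtop)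
  -- the good sets
  set B : ℕ → Set (EuclideanSpace ℝ (Fin d)) := fun n => {x ∈ A | ∀ r : ℝ, 0 < r → r ≤ 1 / (n + 1) →
    μ (Metric.closedBall x r) ≤ ε * ENNReal.ofReal r ^ s} with hB_def
  have hmono : Monotone B := by
    intro n m hnm x hx
    refine ⟨hx.1, fun r hr hrle => hx.2 r hr (hrle.trans ?_)⟩
    apply one_div_le_one_div_of_le
    · positivity
    · exact_mod_cast add_le_add_left (Nat.cast_le.mpr hnm) 1
  have hcover : A ⊆ ⋃ n, B n := by
    intro x hx
    have hxfin : f x < ∞ := hx.1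
    set ν := μ.withDensity (fun y => k (x - y)) with hν_def
    have hdens : Measurable fun y : EuclideanSpace ℝ (Fin d) => k (x - y) :=
      hk_meas.comp (measurable_const.sub measurable_id)
    have hν_ball : ∀ r : ℝ, ν (Metric.closedBall x r)
        = ∫⁻ y in Metric.closedBall x r, k (x - y) ∂μ := fun r =>
      withDensity_apply _ measurableSet_closedBall
    have hνx : ν {x} = 0 := by
      rw [hν_def, withDensity_apply _ (measurableSet_singleton x),
        lintegral_singleton (fun y => k (x - y)) x, hsing x hxfin, mul_zero]
    have hνfin : ν (Metric.closedBall x 1) ≠ ∞ := by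
      refine ne_top_of_le_ne_top hxfin.ne ?_
      rw [hν_ball]
      exact setLIntegral_le_lintegral _ _
    have hanti : Antitone fun n : ℕ => Metric.closedBall x (1 / (n + 1)) := by
      intro n m hnm
      apply Metric.closedBall_subset_closedBall
      apply one_div_le_one_div_of_le
      · positivity
      · exact_mod_cast add_le_add_left (Nat.cast_le.mpr hnm) 1
    have hinter : ⋂ n : ℕ, Metric.closedBall x (1 / (n + 1)) = {x} := by
      ext y
      simp only [Set.mem_iInter, Metric.mem_closedBall, Set.mem_singleton_iff]
      constructor
      · intro hy
        by_contra hne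
        have hd : 0 < dist y x := dist_pos.mpr hne
        obtain ⟨n, hn⟩ := exists_nat_one_div_lt hd
        exact absurd (hy n) (not_le.mpr hn)
      · rintro rfl
        intro n
        simp only [dist_self]
        positivity
    have htend : Tendsto (fun n : ℕ => ν (Metric.closedBall x (1 / (n + 1)))) atTop (𝓝 0) := by
      have := tendsto_measure_iInter_atTop (μ := ν)
        (s := fun n : ℕ => Metric.closedBall x (1 / (n + 1)))
        (fun n => measurableSet_closedBall.nullMeasurableSet) hanti
        ⟨0, by simpa using hνfin⟩
      rw [hinter, hνx] at this
      exact this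
    obtain ⟨m, hm⟩ := (htend.eventually_lt_const hεpos).exists
    refine Set.mem_iUnion.mpr ⟨m, hx, fun r hr hrle => ?_⟩
    calc μ (Metric.closedBall x r)
        ≤ ENNReal.ofReal r ^ s * ∫⁻ y in Metric.closedBall x r, k (x - y) ∂μ := fact1 x r hr
      _ = ENNReal.ofReal r ^ s * ν (Metric.closedBall x r) := by rw [hν_ball]
      _ ≤ ENNReal.ofReal r ^ s * ν (Metric.closedBall x (1 / (m + 1))) :=
          mul_le_mul_right (measure_mono (Metric.closedBall_subset_closedBall hrle)) _
      _ ≤ ENNReal.ofReal r ^ s * ε := mul_le_mul_right hm.le _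
      _ = ε * ENNReal.ofReal r ^ s := mul_comm _ _
  -- each good set has small measure via a covering argument
  have hBn : ∀ n : ℕ, μ (B n) ≤ 2⁻¹ := by
    intro n
    set δ : ℝ≥0∞ := ENNReal.ofReal (1 / (n + 1)) with hδ_def
    have hδpos : 0 < δ := ENNReal.ofReal_pos.mpr (by positivity)
    have hBK : B n ⊆ K := fun x hx => hx.1.2
    have hHB : μH[s] (B n) ≤ H := measure_mono hBK
    have hlt : (⨅ (t : ℕ → Set (EuclideanSpace ℝ (Fin d))) (_ : B n ⊆ ⋃ j, t j) (_ : ∀ j, EMetric.diam (t j) ≤ δ),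
        ∑' j, ⨆ _ : (t j).Nonempty, EMetric.diam (t j) ^ s) < H + 1 := by
      refine lt_of_le_of_lt ?_ (ENNReal.lt_add_right h.ne one_ne_zero)
      refine le_trans ?_ hHB
      rw [Measure.hausdorffMeasure_apply]
      exact le_iSup₂ (f := fun (r : ℝ≥0∞) (_ : 0 < r) =>
        ⨅ (t : ℕ → Set (EuclideanSpace ℝ (Fin d))) (_ : B n ⊆ ⋃ j, t j) (_ : ∀ j, EMetric.diam (t j) ≤ r),
          ∑' j, ⨆ _ : (t j).Nonempty, EMetric.diam (t j) ^ s) δ hδpos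
    simp only [iInf_lt_iff] at hlt
    obtain ⟨t, hcov, hdiam, hsum⟩ := hlt
    have key : ∀ j, μ (B n ∩ t j) ≤ ε * ⨆ _ : (t j).Nonempty, EMetric.diam (t j) ^ s := by
      intro j
      rcases Set.eq_empty_or_nonempty (B n ∩ t j) with he | ⟨x, hxB, hxt⟩
      · simp [he]
      · have htne : (t j).Nonempty := ⟨x, hxt⟩
        rw [iSup_pos htne]
        set D := EMetric.diam (t j) with hD_def
        have hDδ : D ≤ δ := hdiam j
        have hDtop : D ≠ ∞ := (hDδ.trans_lt ENNReal.ofReal_lt_top).ne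
        set r := D.toReal with hr_def
        have hrle : r ≤ 1 / (n + 1) := by
          have := ENNReal.toReal_mono ENNReal.ofReal_ne_top hDδ
          rwa [ENNReal.toReal_ofReal (by positivity)] at this
        have hsub : t j ⊆ Metric.closedBall x r := by
          intro y hy
          rw [Metric.mem_closedBall, dist_edist]
          exact ENNReal.toReal_mono hDtop (EMetric.edist_le_diam_of_mem hy hxt)
        rcases le_or_gt r 0 with hr0 | hr0
        · have hr0' : r = 0 := le_antisymm hr0 ENNReal.toReal_nonneg
          have hsubx : B n ∩ t j ⊆ {x} := fun y hy => by
            have := hsub hy.2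
            rw [hr0', Metric.closedBall_zero] at this
            exact this
          calc μ (B n ∩ t j) ≤ μ {x} := measure_mono hsubx
            _ = 0 := hsing x hxB.1.1
            _ ≤ _ := zero_le
        · calc μ (B n ∩ t j) ≤ μ (Metric.closedBall x r) :=
              measure_mono (Set.inter_subset_right.trans hsub)
            _ ≤ ε * ENNReal.ofReal r ^ s := hxB.2 r hr0 hrle
            _ = ε * D ^ s := by rw [hr_def, ENNReal.ofReal_toReal hDtop]
    calc μ (B n) ≤ μ (⋃ j, B n ∩ t j) := by
          refine measure_mono ?_
          rw [← Set.inter_iUnion]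
          exact Set.subset_inter subset_rfl hcov
      _ ≤ ∑' j, μ (B n ∩ t j) := measure_iUnion_le _
      _ ≤ ∑' j, ε * ⨆ _ : (t j).Nonempty, EMetric.diam (t j) ^ s := ENNReal.tsum_le_tsum key
      _ = ε * ∑' j, ⨆ _ : (t j).Nonempty, EMetric.diam (t j) ^ s := ENNReal.tsum_mul_left
      _ ≤ ε * (H + 1) := mul_le_mul_right hsum.le _
      _ = 2⁻¹ := by
          rw [hε_def, ENNReal.mul_inv (Or.inl (by norm_num)) (Or.inl (by norm_num)), mul_assoc,
            ENNReal.inv_mul_cancel hH0 hHtop, mul_one]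
  -- contradiction
  have hfinal : (1 : ℝ≥0∞) ≤ 2⁻¹ := by
    calc (1 : ℝ≥0∞) = μ A := hA1.symm
      _ ≤ μ (⋃ n, B n) := measure_mono hcover
      _ = ⨆ n, μ (B n) := hmono.measure_iUnion
      _ ≤ 2⁻¹ := iSup_le hBn
  norm_num at hfinal

end Aux

/-- Frostman–Taylor, one direction: if `K ⊂ ℝ^d` is compact with finite `s`-dimensional
Hausdorff measure (`s > 0`), then its Riesz capacity of order `s` vanishes. -/
theorem rieszCapacity_zero_of_hausdorffMeasure_lt_top (d : ℕ) (s : ℝ) (hs : 0 < s)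
    (K : Set (EuclideanSpace ℝ (Fin d))) (hK : IsCompact K) (h : μH[s] K < ∞) :
    rieszCapacity d s K = 0 := by
  rw [rieszCapacity, ENNReal.inv_eq_zero, eq_top_iff]
  refine le_iInf fun μ => le_iInf fun hp => le_iInf fun hc => ?_
  exact (riesz_energy_eq_top_aux d s hs K h μ hp hc).ge
end
end

section
/- Let u₁ : ℝ^d → [0,∞] be measurable and continuous away from 0, radially symmetric, with c₁|x|^{−d/2} ≤ u₁(x) ≤ c₂|x|^{−d/2} for small |x| and exponential decay at infinity. Then the convolution u = u₁ ∗ u₁ satisfies c₄(−log|x|) ≤ u(x) ≤ c₃(−log|x|) for all sufficiently small |x|, for some positive constants c₃, c₄. -/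
open MeasureTheory Filter
open scoped ENNReal

open Set Metric

noncomputable section



theorem polar_lintegral {E : Type*} [NormedAddCommGroup E] [NormedSpace ℝ E]
    [MeasurableSpace E] [BorelSpace E] [FiniteDimensional ℝ E] [Nontrivial E]
    (μ : Measure E) [μ.IsAddHaarMeasure] (f : ℝ → ℝ≥0∞) (hf : Measurable f) :
    ∫⁻ x, f ‖x‖ ∂μ = μ.toSphere univ *
      ∫⁻ t in Ioi (0 : ℝ), ENNReal.ofReal (t ^ (Module.finrank ℝ E - 1)) * f t := by
  have h1 : ∫⁻ x, f ‖x‖ ∂μ = ∫⁻ x : ({(0 : E)}ᶜ : Set E), f ‖x.1‖ ∂(μ.comap (↑)) := by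
    rw [lintegral_subtype_comap (measurableSet_singleton _).compl fun x ↦ f ‖x‖,
      restrict_compl_singleton]
  rw [h1]
  have h2 := (μ.measurePreserving_homeomorphUnitSphereProd).lintegral_comp
    (f := fun p : sphere (0:E) 1 × Ioi (0:ℝ) => f p.2.1)
    (by exact hf.comp (measurable_subtype_coe.comp measurable_snd))
  have h2' : ∫⁻ x : ({(0 : E)}ᶜ : Set E), f ‖x.1‖ ∂(μ.comap (↑)) =
      ∫⁻ p : sphere (0:E) 1 × Ioi (0:ℝ), f p.2.1
        ∂(μ.toSphere.prod (.volumeIoiPow (Module.finrank ℝ E - 1))) := by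
    rw [← h2]; simp [homeomorphUnitSphereProd]
  rw [h2']
  rw [lintegral_prod _ (by exact (hf.comp (measurable_subtype_coe.comp measurable_snd)).aemeasurable)]
  simp only [lintegral_const]
  rw [mul_comm]
  congr 1
  rw [Measure.volumeIoiPow,
    lintegral_withDensity_eq_lintegral_mul _ (by fun_prop) (by exact hf.comp measurable_subtype_coe)]
  exact lintegral_subtype_comap measurableSet_Ioi fun t => ENNReal.ofReal (t ^ (Module.finrank ℝ E - 1)) * f t

namespace LogKernelAux

variable (d : ℕ)

local notation "E" => EuclideanSpace ℝ (Fin d)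

theorem nontrivialE (hd : 0 < d) : Nontrivial (EuclideanSpace ℝ (Fin d)) :=
  Module.nontrivial_of_finrank_pos (R := ℝ) (by rw [finrank_euclideanSpace_fin]; exact hd)

/-- The sphere constant. -/
def kap : ℝ≥0∞ := (volume : Measure (EuclideanSpace ℝ (Fin d))).toSphere univ

theorem kap_eq (hd : 0 < d) :
    kap d = (d : ℝ≥0∞) * volume (ball (0 : EuclideanSpace ℝ (Fin d)) 1) := by
  haveI := nontrivialE d hd
  rw [kap, Measure.toSphere_apply_univ, finrank_euclideanSpace_fin]

theorem kap_ne_zero (hd : 0 < d) : kap d ≠ 0 := by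
  rw [kap_eq d hd]
  exact mul_ne_zero (by exact_mod_cast hd.ne') (measure_ball_pos _ _ one_pos).ne'

theorem kap_ne_top (hd : 0 < d) : kap d ≠ ⊤ :=
  (kap_eq d hd) ▸ (ENNReal.mul_lt_top (ENNReal.natCast_lt_top d) measure_ball_lt_top).ne

theorem annulus_lintegral (hd : 0 < d) (a b : ℝ) (ha : 0 < a) (hab : a ≤ b) :
    ∫⁻ y : EuclideanSpace ℝ (Fin d),
      ({y : EuclideanSpace ℝ (Fin d) | a ≤ ‖y‖ ∧ ‖y‖ ≤ b}).indicator
        (fun y => ENNReal.ofReal (‖y‖ ^ (-(d:ℝ)))) y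
      = kap d * ENNReal.ofReal (Real.log b - Real.log a) := by
  haveI := nontrivialE d hd
  set f : ℝ → ℝ≥0∞ := (Icc a b).indicator (fun t => ENNReal.ofReal (t ^ (-(d:ℝ)))) with hf
  have hfm : Measurable f := Measurable.indicator (by fun_prop) measurableSet_Icc
  have key : ∀ y : EuclideanSpace ℝ (Fin d),
      ({y : EuclideanSpace ℝ (Fin d) | a ≤ ‖y‖ ∧ ‖y‖ ≤ b}).indicator
        (fun y => ENNReal.ofReal (‖y‖ ^ (-(d:ℝ)))) y = f ‖y‖ := by
    intro y
    simp only [hf, Set.indicator_apply, Set.mem_setOf_eq, Set.mem_Icc]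
  simp_rw [key]
  rw [polar_lintegral _ f hfm]
  have hrk : Module.finrank ℝ (EuclideanSpace ℝ (Fin d)) = d := finrank_euclideanSpace_fin
  rw [← kap]
  congr 1
  have hcong : ∀ t ∈ Ioi (0:ℝ),
      ENNReal.ofReal (t ^ (Module.finrank ℝ (EuclideanSpace ℝ (Fin d)) - 1)) * f t
        = (Icc a b).indicator (fun t => ENNReal.ofReal t⁻¹) t := by
    intro t ht
    have ht0 : (0:ℝ) < t := ht
    by_cases htm : t ∈ Icc a b
    · rw [hf, Set.indicator_of_mem htm, Set.indicator_of_mem htm,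
        ← ENNReal.ofReal_mul (by positivity)]
      congr 1
      rw [hrk, ← Real.rpow_natCast t (d - 1), ← Real.rpow_add ht0]
      have : ((d - 1 : ℕ) : ℝ) + (-(d:ℝ)) = -1 := by
        rw [Nat.cast_sub hd]; push_cast; ring
      rw [this, Real.rpow_neg_one]
    · rw [hf, Set.indicator_of_notMem htm, Set.indicator_of_notMem htm, mul_zero]
  rw [setLIntegral_congr_fun measurableSet_Ioi hcong,
    lintegral_indicator measurableSet_Icc _,
    Measure.restrict_restrict measurableSet_Icc,
    show Icc a b ∩ Ioi (0:ℝ) = Icc a b from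
      inter_eq_self_of_subset_left fun t ht => lt_of_lt_of_le ha ht.1]
  have hint : IntegrableOn (fun t : ℝ => t⁻¹) (Icc a b) := by
    apply ContinuousOn.integrableOn_Icc
    exact continuousOn_inv₀.mono fun t ht => ne_of_gt (lt_of_lt_of_le ha ht.1)
  have hnn : 0 ≤ᵐ[volume.restrict (Icc a b)] fun t : ℝ => t⁻¹ := by
    filter_upwards [ae_restrict_mem measurableSet_Icc] with t ht
    exact inv_nonneg.2 (le_trans ha.le ht.1)
  rw [← ofReal_integral_eq_lintegral_ofReal hint hnn]
  congr 1
  rw [integral_Icc_eq_integral_Ioc, ← intervalIntegral.integral_of_le hab,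
    integral_inv (by
      intro h
      rcases Set.mem_uIcc.1 h with ⟨h1, _⟩ | ⟨h2, _⟩
      · exact absurd h1 (not_le.2 ha)
      · exact absurd h2 (not_le.2 (lt_of_lt_of_le ha hab))),
    Real.log_div (lt_of_lt_of_le ha hab).ne' ha.ne']

theorem ball_lintegral (hd : 0 < d) (ρ : ℝ) (hρ : 0 < ρ) :
    ∫⁻ y : EuclideanSpace ℝ (Fin d),
      (closedBall (0 : EuclideanSpace ℝ (Fin d)) ρ).indicator
        (fun y => ENNReal.ofReal (‖y‖ ^ (-(d:ℝ)/2))) y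
      = kap d * ENNReal.ofReal (ρ ^ ((d:ℝ)/2) * (2/(d:ℝ))) := by
  haveI := nontrivialE d hd
  set f : ℝ → ℝ≥0∞ := (Icc 0 ρ).indicator (fun t => ENNReal.ofReal (t ^ (-(d:ℝ)/2))) with hf
  have hfm : Measurable f := Measurable.indicator (by fun_prop) measurableSet_Icc
  have key : ∀ y : EuclideanSpace ℝ (Fin d),
      (closedBall (0 : EuclideanSpace ℝ (Fin d)) ρ).indicator
        (fun y => ENNReal.ofReal (‖y‖ ^ (-(d:ℝ)/2))) y = f ‖y‖ := by
    intro y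
    rw [hf]
    by_cases h : ‖y‖ ≤ ρ
    · rw [Set.indicator_of_mem (mem_closedBall_zero_iff.2 h),
        Set.indicator_of_mem (Set.mem_Icc.2 ⟨norm_nonneg _, h⟩)]
    · rw [Set.indicator_of_notMem (fun hc => h (mem_closedBall_zero_iff.1 hc)),
        Set.indicator_of_notMem (fun hc => h (Set.mem_Icc.1 hc).2)]
  simp_rw [key]
  rw [polar_lintegral _ f hfm, ← kap]
  have hrk : Module.finrank ℝ (EuclideanSpace ℝ (Fin d)) = d := finrank_euclideanSpace_fin
  congr 1
  have hcong : ∀ t ∈ Ioi (0:ℝ),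
      ENNReal.ofReal (t ^ (Module.finrank ℝ (EuclideanSpace ℝ (Fin d)) - 1)) * f t
        = (Ioc 0 ρ).indicator (fun t => ENNReal.ofReal (t ^ ((d:ℝ)/2 - 1))) t := by
    intro t ht
    have ht0 : (0:ℝ) < t := ht
    by_cases htm : t ∈ Ioc (0:ℝ) ρ
    · rw [hf, Set.indicator_of_mem (Set.mem_Icc.2 ⟨ht0.le, htm.2⟩), Set.indicator_of_mem htm,
        ← ENNReal.ofReal_mul (by positivity)]
      congr 1
      rw [hrk, ← Real.rpow_natCast t (d - 1), ← Real.rpow_add ht0]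
      congr 1
      rw [Nat.cast_sub hd]; push_cast; ring
    · have htm' : t ∉ Icc (0:ℝ) ρ := by
        simp only [Set.mem_Ioc, not_and_or, not_lt, not_le] at htm
        rcases htm with h | h
        · exact absurd ht0 (not_lt.2 h)
        · simp [Set.mem_Icc, not_le.2 h]
      rw [hf, Set.indicator_of_notMem htm', Set.indicator_of_notMem htm, mul_zero]
  rw [setLIntegral_congr_fun measurableSet_Ioi hcong,
    lintegral_indicator measurableSet_Ioc _,
    Measure.restrict_restrict measurableSet_Ioc,
    show Ioc (0:ℝ) ρ ∩ Ioi (0:ℝ) = Ioc 0 ρ from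
      inter_eq_self_of_subset_left fun t ht => ht.1]
  have he : (-1:ℝ) < (d:ℝ)/2 - 1 := by
    have : (1:ℝ) ≤ d := by exact_mod_cast hd
    linarith
  have hint : IntegrableOn (fun t : ℝ => t ^ ((d:ℝ)/2 - 1)) (Ioc 0 ρ) := by
    rw [← intervalIntegrable_iff_integrableOn_Ioc_of_le hρ.le]
    exact intervalIntegral.intervalIntegrable_rpow' he
  have hnn : 0 ≤ᵐ[volume.restrict (Ioc 0 ρ)] fun t : ℝ => t ^ ((d:ℝ)/2 - 1) := by
    filter_upwards [ae_restrict_mem measurableSet_Ioc] with t ht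
    exact Real.rpow_nonneg ht.1.le _
  rw [← ofReal_integral_eq_lintegral_ofReal hint hnn]
  congr 1
  rw [← intervalIntegral.integral_of_le hρ.le, integral_rpow (Or.inl he)]
  have hd2 : (d:ℝ)/2 - 1 + 1 = (d:ℝ)/2 := by ring
  rw [hd2, Real.zero_rpow (by positivity), sub_zero]
  have hdd : (0:ℝ) < (d:ℝ) := by exact_mod_cast hd
  field_simp

theorem lintegral_comp_sub (g : EuclideanSpace ℝ (Fin d) → ℝ≥0∞) (hg : Measurable g)
    (x : EuclideanSpace ℝ (Fin d)) : ∫⁻ y, g (x - y) = ∫⁻ y, g y := by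
  have A : Measurable fun z : EuclideanSpace ℝ (Fin d) => g (x + z) :=
    hg.comp (by fun_prop)
  calc ∫⁻ y, g (x - y) = ∫⁻ y, (fun z => g (x + z)) (-y) := by simp_rw [sub_eq_add_neg]
    _ = ∫⁻ z, g (x + z) ∂(Measure.map Neg.neg volume) := (lintegral_map A measurable_neg).symm
    _ = ∫⁻ z, g (x + z) := by rw [Measure.map_neg_eq_self]
    _ = ∫⁻ z, g z := lintegral_add_left_eq_self (fun z => g z) x

end LogKernelAux


theorem exp_decay_le (d : ℕ) (r c : ℝ) (hr : 0 < r) (hc : 0 < c) (t : ℝ) (ht : r ≤ t) :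
    Real.exp (-c * t) ≤
      ((Nat.factorial (d+1) : ℝ) * (c⁻¹)^(d+1) * (1+1/r)^(d+1)) * (1+t) ^ (-((d:ℝ)+1)) := by
  have ht0 : 0 < t := lt_of_lt_of_le hr ht
  have h1t : (0:ℝ) < 1 + t := by linarith
  have hpow : (1+t) ^ (-((d:ℝ)+1)) = ((1+t)^(d+1))⁻¹ := by
    rw [← Real.rpow_natCast (1+t) (d+1), ← Real.rpow_neg h1t.le]
    norm_num
  rw [hpow]
  have hexp : Real.exp (-c * t) ≤ (Nat.factorial (d+1) : ℝ) * ((c*t)^(d+1))⁻¹ := by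
    have hfact : (c*t)^(d+1) / (Nat.factorial (d+1) : ℝ) ≤ Real.exp (c*t) :=
      Real.pow_div_factorial_le_exp (c*t) (mul_nonneg hc.le ht0.le) (d+1)
    rw [neg_mul, Real.exp_neg, inv_le_comm₀ (Real.exp_pos _) (by positivity)]
    have heq : ((Nat.factorial (d+1) : ℝ) * ((c*t)^(d+1))⁻¹)⁻¹
        = (c*t)^(d+1) / (Nat.factorial (d+1) : ℝ) := by
      rw [mul_inv, inv_inv]; ring
    rw [heq]; exact hfact
  have h1t' : 1 + t ≤ (1+1/r) * t := by
    have h2 : 1 ≤ t / r := (one_le_div hr).2 ht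
    have h3 : 1 ≤ t * r⁻¹ := by rwa [div_eq_mul_inv] at h2
    have h4 : (1+1/r) * t = t + t * r⁻¹ := by field_simp
    linarith
  have hmono : ((1+t):ℝ)^(d+1) ≤ ((1+1/r) * t)^(d+1) := pow_le_pow_left₀ h1t.le h1t' _
  have hsplit : (((1+1/r) * t):ℝ)^(d+1) = (1+1/r)^(d+1) * t^(d+1) := mul_pow _ _ _
  calc Real.exp (-c * t) ≤ (Nat.factorial (d+1) : ℝ) * ((c*t)^(d+1))⁻¹ := hexp
    _ = (Nat.factorial (d+1) : ℝ) * (c⁻¹)^(d+1) * (t^(d+1))⁻¹ := by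
        rw [mul_pow, mul_inv, ← inv_pow]; ring
    _ ≤ ((Nat.factorial (d+1) : ℝ) * (c⁻¹)^(d+1) * (1+1/r)^(d+1)) * ((1+t)^(d+1))⁻¹ := by
        have h2 : (t^(d+1):ℝ)⁻¹ ≤ (1+1/r)^(d+1) * ((1+t)^(d+1))⁻¹ := by
          calc (t^(d+1):ℝ)⁻¹ = (1+1/r)^(d+1) * (((1+1/r)^(d+1)) * t^(d+1))⁻¹ := by
                field_simp
            _ ≤ (1+1/r)^(d+1) * ((1+t)^(d+1))⁻¹ := by
                gcongr
                rw [← hsplit]; exact hmono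
        calc (Nat.factorial (d+1) : ℝ) * (c⁻¹)^(d+1) * (t^(d+1))⁻¹
            ≤ (Nat.factorial (d+1) : ℝ) * (c⁻¹)^(d+1) * ((1+1/r)^(d+1) * ((1+t)^(d+1))⁻¹) := by
              gcongr
          _ = ((Nat.factorial (d+1) : ℝ) * (c⁻¹)^(d+1) * (1+1/r)^(d+1)) * ((1+t)^(d+1))⁻¹ := by ring

theorem far_lintegral (d : ℕ) (hd : 0 < d)
    (u₁ : EuclideanSpace ℝ (Fin d) → ℝ≥0∞) (hmeas : Measurable u₁)
    (c₂ r : ℝ) (hc₂ : 0 < c₂) (hr : 0 < r)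
    (hnear : ∀ x : EuclideanSpace ℝ (Fin d), x ≠ 0 → ‖x‖ < r →
      u₁ x ≤ ENNReal.ofReal (c₂ * ‖x‖ ^ (-(d : ℝ) / 2)))
    (C c : ℝ) (hC : 0 < C) (hc : 0 < c)
    (hfar : ∀ x : EuclideanSpace ℝ (Fin d), r ≤ ‖x‖ →
      u₁ x ≤ ENNReal.ofReal (C * Real.exp (-c * ‖x‖)))
    (R : ℝ) (hR : 0 < R) :
    ∫⁻ y, ({y : EuclideanSpace ℝ (Fin d) | R ≤ ‖y‖}).indicator u₁ y < ⊤ := by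
  set K : ℝ := C * ((Nat.factorial (d+1) : ℝ) * (c⁻¹)^(d+1) * (1+1/r)^(d+1)) with hK
  have hK0 : 0 ≤ K := by positivity
  have hpt : ∀ y : EuclideanSpace ℝ (Fin d),
      ({y : EuclideanSpace ℝ (Fin d) | R ≤ ‖y‖}).indicator u₁ y ≤
        (closedBall (0:EuclideanSpace ℝ (Fin d)) r).indicator
          (fun _ => ENNReal.ofReal (c₂ * R ^ (-(d:ℝ)/2))) y
        + ENNReal.ofReal (K * (1+‖y‖) ^ (-((d:ℝ)+1))) := by
    intro y
    by_cases hy : R ≤ ‖y‖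
    · rw [Set.indicator_of_mem (show y ∈ {y : EuclideanSpace ℝ (Fin d) | R ≤ ‖y‖} from hy)]
      by_cases hyr : ‖y‖ < r
      · have hy0 : y ≠ 0 := by
          intro h; rw [h, norm_zero] at hy; linarith
        have h1 : u₁ y ≤ ENNReal.ofReal (c₂ * ‖y‖ ^ (-(d:ℝ)/2)) := hnear y hy0 hyr
        have h2 : c₂ * ‖y‖ ^ (-(d:ℝ)/2) ≤ c₂ * R ^ (-(d:ℝ)/2) := by
          apply mul_le_mul_of_nonneg_left _ hc₂.le
          apply Real.rpow_le_rpow_of_nonpos hR hy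
          have : (0:ℝ) ≤ (d:ℝ) := Nat.cast_nonneg d
          linarith
        rw [Set.indicator_of_mem (mem_closedBall_zero_iff.2 hyr.le)]
        exact le_trans (h1.trans (ENNReal.ofReal_le_ofReal h2)) le_self_add
      · push_neg at hyr
        have h1 := hfar y hyr
        have h2 : C * Real.exp (-c*‖y‖) ≤ K * (1+‖y‖) ^ (-((d:ℝ)+1)) := by
          have h3 := exp_decay_le d r c hr hc ‖y‖ hyr
          calc C * Real.exp (-c*‖y‖)
              ≤ C * (((Nat.factorial (d+1):ℝ) * (c⁻¹)^(d+1) * (1+1/r)^(d+1)) *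
                  (1+‖y‖) ^ (-((d:ℝ)+1))) := mul_le_mul_of_nonneg_left h3 hC.le
            _ = K * (1+‖y‖) ^ (-((d:ℝ)+1)) := by rw [hK]; ring
        exact le_trans (h1.trans (ENNReal.ofReal_le_ofReal h2)) le_add_self
    · rw [Set.indicator_of_notMem (show y ∉ {y : EuclideanSpace ℝ (Fin d) | R ≤ ‖y‖} from hy)]; exact zero_le
  have hG1m : Measurable ((closedBall (0:EuclideanSpace ℝ (Fin d)) r).indicator
      (fun _ => ENNReal.ofReal (c₂ * R ^ (-(d:ℝ)/2)))) :=
    measurable_const.indicator measurableSet_closedBall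
  calc ∫⁻ y, ({y : EuclideanSpace ℝ (Fin d) | R ≤ ‖y‖}).indicator u₁ y
      ≤ ∫⁻ y, ((closedBall (0:EuclideanSpace ℝ (Fin d)) r).indicator
          (fun _ => ENNReal.ofReal (c₂ * R ^ (-(d:ℝ)/2))) y
        + ENNReal.ofReal (K * (1+‖y‖) ^ (-((d:ℝ)+1)))) := lintegral_mono hpt
    _ = (∫⁻ y, (closedBall (0:EuclideanSpace ℝ (Fin d)) r).indicator
          (fun _ => ENNReal.ofReal (c₂ * R ^ (-(d:ℝ)/2))) y)
        + ∫⁻ y : EuclideanSpace ℝ (Fin d), ENNReal.ofReal (K * (1+‖y‖) ^ (-((d:ℝ)+1))) :=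
        lintegral_add_left hG1m _
    _ < ⊤ := by
        apply ENNReal.add_lt_top.2
        constructor
        · rw [lintegral_indicator measurableSet_closedBall, setLIntegral_const]
          exact ENNReal.mul_lt_top ENNReal.ofReal_lt_top measure_closedBall_lt_top
        · have : ∀ y : EuclideanSpace ℝ (Fin d),
              ENNReal.ofReal (K * (1+‖y‖) ^ (-((d:ℝ)+1)))
                = ENNReal.ofReal K * ENNReal.ofReal ((1+‖y‖) ^ (-((d:ℝ)+1))) := fun y =>
            ENNReal.ofReal_mul hK0
          simp_rw [this]
          rw [lintegral_const_mul' _ _ ENNReal.ofReal_ne_top]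
          apply ENNReal.mul_lt_top ENNReal.ofReal_lt_top
          have hlt : ((Module.finrank ℝ (EuclideanSpace ℝ (Fin d)) : ℝ)) < (d:ℝ)+1 := by
            rw [finrank_euclideanSpace_fin]; exact lt_add_one _
          exact finite_integral_one_add_norm hlt


set_option maxHeartbeats 2000000 in
/-- Giraud-type kernel estimate: if `u₁ : ℝ^d → [0,∞]` is radially symmetric, continuous away
from `0`, comparable to `|x|^{-d/2}` near `0` and exponentially decaying at infinity, then the
convolution `u = u₁ ∗ u₁` satisfies `c₄(−log|x|) ≤ u(x) ≤ c₃(−log|x|)` for small `|x|`. -/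
theorem log_kernel_estimate (d : ℕ) (hd : 0 < d)
    (u₁ : EuclideanSpace ℝ (Fin d) → ℝ≥0∞) (hmeas : Measurable u₁)
    (hcont : ContinuousOn u₁ {x | x ≠ 0})
    (hrad : ∀ x y : EuclideanSpace ℝ (Fin d), ‖x‖ = ‖y‖ → u₁ x = u₁ y)
    (c₁ c₂ r : ℝ) (hc₁ : 0 < c₁) (hc₂ : 0 < c₂) (hr : 0 < r)
    (hnear : ∀ x : EuclideanSpace ℝ (Fin d), x ≠ 0 → ‖x‖ < r →
      ENNReal.ofReal (c₁ * ‖x‖ ^ (-(d : ℝ) / 2)) ≤ u₁ x ∧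
      u₁ x ≤ ENNReal.ofReal (c₂ * ‖x‖ ^ (-(d : ℝ) / 2)))
    (C c : ℝ) (hC : 0 < C) (hc : 0 < c)
    (hfar : ∀ x : EuclideanSpace ℝ (Fin d), r ≤ ‖x‖ →
      u₁ x ≤ ENNReal.ofReal (C * Real.exp (-c * ‖x‖))) :
    ∃ c₃ c₄ r₀ : ℝ, 0 < c₃ ∧ 0 < c₄ ∧ 0 < r₀ ∧ r₀ < 1 ∧
      ∀ x : EuclideanSpace ℝ (Fin d), x ≠ 0 → ‖x‖ < r₀ →
        ENNReal.ofReal (c₄ * (-Real.log ‖x‖)) ≤ (∫⁻ y, u₁ (x - y) * u₁ y) ∧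
        (∫⁻ y, u₁ (x - y) * u₁ y) ≤ ENNReal.ofReal (c₃ * (-Real.log ‖x‖)) := by
  haveI := LogKernelAux.nontrivialE d hd
  haveI : NullSingletonClass (volume : Measure (EuclideanSpace ℝ (Fin d))) := by infer_instance
  have hd0 : (0:ℝ) < d := Nat.cast_pos.2 hd
  set R : ℝ := min r 1 / 4 with hRdef
  have hminpos : 0 < min r 1 := lt_min hr one_pos
  have hminr : min r 1 ≤ r := min_le_left r 1
  have hmin1 : min r 1 ≤ 1 := min_le_right r 1
  have hR : 0 < R := by rw [hRdef]; positivity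
  have hR4 : 4 * R ≤ r := by rw [hRdef]; linarith
  have hR1 : R ≤ 1/4 := by rw [hRdef]; linarith
  set kR : ℝ := (LogKernelAux.kap d).toReal with hkRdef
  have hkap : LogKernelAux.kap d = ENNReal.ofReal kR := by
    rw [hkRdef, ENNReal.ofReal_toReal (LogKernelAux.kap_ne_top d hd)]
  have hkR : 0 < kR :=
    ENNReal.toReal_pos (LogKernelAux.kap_ne_zero d hd) (LogKernelAux.kap_ne_top d hd)
  have hfarfin := far_lintegral d hd u₁ hmeas c₂ r hc₂ hr
    (fun z hz hzr => (hnear z hz hzr).2) C c hC hc hfar R hR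
  set Tf : ℝ := (∫⁻ y, ({y : EuclideanSpace ℝ (Fin d) | R ≤ ‖y‖}).indicator u₁ y).toReal
    with hTfdef
  have hTf0 : 0 ≤ Tf := ENNReal.toReal_nonneg
  have hTfeq : ∫⁻ y, ({y : EuclideanSpace ℝ (Fin d) | R ≤ ‖y‖}).indicator u₁ y
      = ENNReal.ofReal Tf := by
    rw [hTfdef, ENNReal.ofReal_toReal hfarfin.ne]
  set M₀ : ℝ := max (c₂ * (R/2) ^ (-(d:ℝ)/2)) C with hM₀def
  have hM0 : 0 ≤ M₀ := le_trans hC.le (le_max_right _ _)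
  obtain ⟨KG, hKGdef⟩ : ∃ t : ℝ, t = c₂^2 * kR * (2/(d:ℝ)) * 4 ^ ((d:ℝ)/2) := ⟨_, rfl⟩
  obtain ⟨KB, hKBdef⟩ : ∃ t : ℝ, t = c₂^2 * kR * (2/(d:ℝ)) := ⟨_, rfl⟩
  obtain ⟨KC, hKCdef⟩ : ∃ t : ℝ, t = c₂^2 * (2:ℝ) ^ ((d:ℝ)/2) * kR := ⟨_, rfl⟩
  obtain ⟨Klow, hKlowdef⟩ : ∃ t : ℝ, t = c₁^2 * (2:ℝ) ^ (-(d:ℝ)/2) * kR := ⟨_, rfl⟩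
  have hKG0 : 0 ≤ KG := by rw [hKGdef]; positivity
  have hKB0 : 0 ≤ KB := by rw [hKBdef]; positivity
  have hKC0 : 0 ≤ KC := by rw [hKCdef]; positivity
  have hKlow : 0 < Klow := by rw [hKlowdef]; positivity
  refine ⟨KG + KB + M₀*Tf + KC + 1, Klow/2, min ((R/2)^2) (Real.exp (-1)),
    by positivity, by positivity, by positivity, ?_, ?_⟩
  · apply lt_of_le_of_lt (min_le_right _ _)
    have h := Real.exp_lt_exp.2 (show (-1:ℝ) < 0 by norm_num)
    simpa using h
  intro x hx0 hxr0
  set n : ℝ := ‖x‖ with hndef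
  have hn : 0 < n := norm_pos_iff.2 hx0
  have hn1 : n < (R/2)^2 := lt_of_lt_of_le hxr0 (min_le_left _ _)
  have hne : n < Real.exp (-1) := lt_of_lt_of_le hxr0 (min_le_right _ _)
  have hnR2 : n ≤ R/2 := by nlinarith
  have h2nR : 2*n ≤ R := by linarith
  have hlog : Real.log n < -1 := by
    have h := Real.log_lt_log hn hne; rwa [Real.log_exp] at h
  have hL1 : 1 ≤ -Real.log n := by linarith
  have hnr : 3*n < r := by linarith
  have hlogeq : Real.log (2*n) = Real.log 2 + Real.log n := Real.log_mul two_ne_zero hn.ne'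
  have hexpneg : -(d:ℝ)/2 ≤ 0 := by
    rw [neg_div]; exact neg_nonpos.2 (by positivity)
  set S : Set (EuclideanSpace ℝ (Fin d)) := {y | 2*n ≤ ‖y‖ ∧ ‖y‖ ≤ R} with hSdef
  have hSm : MeasurableSet S := by
    have : S = {y : EuclideanSpace ℝ (Fin d) | 2*n ≤ ‖y‖} ∩
        {y : EuclideanSpace ℝ (Fin d) | ‖y‖ ≤ R} := rfl
    rw [this]
    exact (measurableSet_le measurable_const measurable_norm).inter
      (measurableSet_le measurable_norm measurable_const)
  have hrpow2 : ∀ a : ℝ, 0 < a → a ^ (-(d:ℝ)/2) * a ^ (-(d:ℝ)/2) = a ^ (-(d:ℝ)) := by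
    intro a ha
    rw [← Real.rpow_add ha]
    congr 1; ring
  constructor
  · -- LOWER BOUND
    have hpt : ∀ y, ENNReal.ofReal (c₁^2 * (2:ℝ)^(-(d:ℝ)/2)) *
        S.indicator (fun y => ENNReal.ofReal (‖y‖ ^ (-(d:ℝ)))) y ≤ u₁ (x - y) * u₁ y := by
      intro y
      by_cases hyS : y ∈ S
      · rw [Set.indicator_of_mem hyS]
        obtain ⟨hy1, hy2⟩ := hyS
        have hy0 : (0:ℝ) < ‖y‖ := by linarith
        have hyne : y ≠ 0 := norm_pos_iff.1 hy0
        have hyr : ‖y‖ < r := by linarith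
        have hrev : ‖y - x‖ = ‖x - y‖ := norm_sub_rev y x
        have hxylow : n ≤ ‖x - y‖ := by
          have h := norm_sub_norm_le y x
          rw [hrev] at h; rw [hndef]; linarith [h, hy1]
        have hxy0 : x - y ≠ 0 := norm_pos_iff.1 (by linarith)
        have hxyup : ‖x - y‖ ≤ 2 * ‖y‖ := le_trans (norm_sub_le x y) (by
          rw [← hndef]; linarith)
        have hxyr : ‖x - y‖ < r := by linarith
        have hl1 := (hnear _ hxy0 hxyr).1
        have hl2 := (hnear _ hyne hyr).1
        have hstep : c₁ * (2*‖y‖) ^ (-(d:ℝ)/2) ≤ c₁ * ‖x-y‖ ^ (-(d:ℝ)/2) :=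
          mul_le_mul_of_nonneg_left
            (Real.rpow_le_rpow_of_nonpos (by linarith) hxyup hexpneg) hc₁.le
        have hkey : c₁^2 * (2:ℝ)^(-(d:ℝ)/2) * ‖y‖ ^ (-(d:ℝ))
            = (c₁ * (2*‖y‖) ^ (-(d:ℝ)/2)) * (c₁ * ‖y‖ ^ (-(d:ℝ)/2)) := by
          rw [Real.mul_rpow (by norm_num : (0:ℝ) ≤ 2) hy0.le, ← hrpow2 ‖y‖ hy0]
          ring
        calc ENNReal.ofReal (c₁^2 * (2:ℝ)^(-(d:ℝ)/2)) * ENNReal.ofReal (‖y‖ ^ (-(d:ℝ)))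
            = ENNReal.ofReal ((c₁ * (2*‖y‖) ^ (-(d:ℝ)/2)) * (c₁ * ‖y‖ ^ (-(d:ℝ)/2))) := by
              rw [← ENNReal.ofReal_mul (by positivity), hkey]
          _ = ENNReal.ofReal (c₁ * (2*‖y‖) ^ (-(d:ℝ)/2)) *
              ENNReal.ofReal (c₁ * ‖y‖ ^ (-(d:ℝ)/2)) := ENNReal.ofReal_mul (by positivity)
          _ ≤ u₁ (x - y) * u₁ y :=
              mul_le_mul' (le_trans (ENNReal.ofReal_le_ofReal hstep) hl1) hl2
      · rw [Set.indicator_of_notMem hyS, mul_zero]; exact zero_le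
    have hint : ∫⁻ y, ENNReal.ofReal (c₁^2 * (2:ℝ)^(-(d:ℝ)/2)) *
        S.indicator (fun y => ENNReal.ofReal (‖y‖ ^ (-(d:ℝ)))) y
        = ENNReal.ofReal (c₁^2 * (2:ℝ)^(-(d:ℝ)/2)) *
          (LogKernelAux.kap d * ENNReal.ofReal (Real.log R - Real.log (2*n))) := by
      rw [lintegral_const_mul' _ _ ENNReal.ofReal_ne_top, hSdef,
        LogKernelAux.annulus_lintegral d hd (2*n) R (by linarith) h2nR]
    refine le_trans ?_ (lintegral_mono hpt)
    rw [hint, hkap, ← ENNReal.ofReal_mul hkR.le, ← ENNReal.ofReal_mul (by positivity)]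
    apply ENNReal.ofReal_le_ofReal
    have hlogR2 : Real.log n ≤ 2 * Real.log (R/2) := by
      have h1 : Real.log n ≤ Real.log ((R/2)^2) :=
        (Real.log_le_log_iff hn (by positivity)).2 hn1.le
      rwa [Real.log_pow, Nat.cast_ofNat] at h1
    have hlogR2' : Real.log (R/2) = Real.log R - Real.log 2 := Real.log_div hR.ne' two_ne_zero
    have key : (-Real.log n)/2 ≤ Real.log R - Real.log (2*n) := by
      rw [hlogeq]; linarith
    have base : (0:ℝ) ≤ c₁^2 * (2:ℝ)^(-(d:ℝ)/2) := by positivity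
    calc Klow/2 * (-Real.log n)
        = (c₁^2 * (2:ℝ)^(-(d:ℝ)/2)) * (kR * ((-Real.log n)/2)) := by rw [hKlowdef]; ring
      _ ≤ (c₁^2 * (2:ℝ)^(-(d:ℝ)/2)) * (kR * (Real.log R - Real.log (2*n))) := by
          apply mul_le_mul_of_nonneg_left _ base
          exact mul_le_mul_of_nonneg_left key hkR.le
  · -- UPPER BOUND
    set FG : EuclideanSpace ℝ (Fin d) → ℝ≥0∞ := fun y =>
      ENNReal.ofReal (c₂ * (n/2) ^ (-(d:ℝ)/2)) * (ENNReal.ofReal c₂ *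
        (closedBall (0:EuclideanSpace ℝ (Fin d)) (2*n)).indicator
          (fun y => ENNReal.ofReal (‖y‖ ^ (-(d:ℝ)/2))) y) with hFGdef
    set FB : EuclideanSpace ℝ (Fin d) → ℝ≥0∞ := fun y =>
      ENNReal.ofReal (c₂ * (n/2) ^ (-(d:ℝ)/2)) * (ENNReal.ofReal c₂ *
        (closedBall (0:EuclideanSpace ℝ (Fin d)) (n/2)).indicator
          (fun z => ENNReal.ofReal (‖z‖ ^ (-(d:ℝ)/2))) (x - y)) with hFBdef
    set FC : EuclideanSpace ℝ (Fin d) → ℝ≥0∞ := fun y =>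
      ENNReal.ofReal (c₂^2 * (2:ℝ)^((d:ℝ)/2)) *
        S.indicator (fun y => ENNReal.ofReal (‖y‖ ^ (-(d:ℝ)))) y with hFCdef
    set FD : EuclideanSpace ℝ (Fin d) → ℝ≥0∞ := fun y =>
      ENNReal.ofReal M₀ * ({y : EuclideanSpace ℝ (Fin d) | R ≤ ‖y‖}).indicator u₁ y with hFDdef
    have hFGm : Measurable FG := by
      apply Measurable.const_mul
      · exact (Measurable.indicator (by fun_prop) measurableSet_closedBall).const_mul _
    have hFBm : Measurable FB := by
      apply Measurable.const_mul
      apply Measurable.const_mul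
      exact (Measurable.indicator (by fun_prop) measurableSet_closedBall).comp
        (measurable_const.sub measurable_id)
    have hFCm : Measurable FC :=
      (Measurable.indicator (by fun_prop) hSm).const_mul _
    have hFDm : Measurable FD := (hmeas.indicator (by
      have : {y : EuclideanSpace ℝ (Fin d) | R ≤ ‖y‖} =
          {y : EuclideanSpace ℝ (Fin d) | R ≤ ‖y‖} := rfl
      exact measurableSet_le measurable_const measurable_norm)).const_mul _
    have hpt : ∀ y : EuclideanSpace ℝ (Fin d), y ≠ 0 → y ≠ x →
        u₁ (x - y) * u₁ y ≤ FG y + (FB y + (FC y + FD y)) := by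
      intro y hy0 hyx
      have hrev : ‖y - x‖ = ‖x - y‖ := norm_sub_rev y x
      have hylow : ‖y‖ - n ≤ ‖x - y‖ := by
        have h := norm_sub_norm_le y x
        rw [hrev] at h; rw [hndef]; linarith
      have hyup : ‖x - y‖ ≤ n + ‖y‖ := by
        have := norm_sub_le x y; rw [← hndef] at this; linarith
      by_cases hB : ‖x - y‖ < n/2
      · -- B region
        have hyl : n/2 ≤ ‖y‖ := by
          have h : ‖x‖ ≤ ‖x - y‖ + ‖y‖ := by
            calc ‖x‖ = ‖(x - y) + y‖ := by rw [sub_add_cancel]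
              _ ≤ ‖x - y‖ + ‖y‖ := norm_add_le _ _
          rw [← hndef] at h; linarith
        have hyu : ‖y‖ < r := by
          have h : ‖y‖ ≤ ‖x‖ + ‖x - y‖ := by
            calc ‖y‖ = ‖x - (x - y)‖ := by rw [sub_sub_cancel]
              _ ≤ ‖x‖ + ‖x - y‖ := norm_sub_le _ _
          rw [← hndef] at h; linarith
        have h1 : u₁ y ≤ ENNReal.ofReal (c₂ * (n/2) ^ (-(d:ℝ)/2)) := by
          refine le_trans ((hnear y hy0 hyu).2) (ENNReal.ofReal_le_ofReal ?_)
          exact mul_le_mul_of_nonneg_left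
            (Real.rpow_le_rpow_of_nonpos (by positivity) hyl hexpneg) hc₂.le
        have hxy0 : x - y ≠ 0 := sub_ne_zero.2 (Ne.symm hyx)
        have hxyr : ‖x - y‖ < r := by linarith
        have h2 : u₁ (x - y) ≤ ENNReal.ofReal c₂ *
            (closedBall (0:EuclideanSpace ℝ (Fin d)) (n/2)).indicator
              (fun z => ENNReal.ofReal (‖z‖ ^ (-(d:ℝ)/2))) (x - y) := by
          rw [Set.indicator_of_mem (mem_closedBall_zero_iff.2 hB.le),
            ← ENNReal.ofReal_mul hc₂.le]
          exact (hnear _ hxy0 hxyr).2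
        have hcomb : u₁ (x - y) * u₁ y ≤ FB y := by
          simp only [hFBdef]
          calc u₁ (x - y) * u₁ y ≤ (ENNReal.ofReal c₂ *
              (closedBall (0:EuclideanSpace ℝ (Fin d)) (n/2)).indicator
                (fun z => ENNReal.ofReal (‖z‖ ^ (-(d:ℝ)/2))) (x - y)) *
              ENNReal.ofReal (c₂ * (n/2) ^ (-(d:ℝ)/2)) := mul_le_mul' h2 h1
            _ = ENNReal.ofReal (c₂ * (n/2) ^ (-(d:ℝ)/2)) * (ENNReal.ofReal c₂ *
              (closedBall (0:EuclideanSpace ℝ (Fin d)) (n/2)).indicator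
                (fun z => ENNReal.ofReal (‖z‖ ^ (-(d:ℝ)/2))) (x - y)) := by ring
        calc u₁ (x - y) * u₁ y ≤ FB y := hcomb
          _ ≤ FB y + (FC y + FD y) := le_self_add
          _ ≤ FG y + (FB y + (FC y + FD y)) := le_add_self
      · push_neg at hB
        by_cases hG : ‖y‖ ≤ 2*n
        · -- G region
          have hxy0 : x - y ≠ 0 := norm_pos_iff.1 (by linarith)
          have hxyr : ‖x - y‖ < r := by linarith
          have h2 : u₁ (x - y) ≤ ENNReal.ofReal (c₂ * (n/2) ^ (-(d:ℝ)/2)) := by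
            refine le_trans ((hnear _ hxy0 hxyr).2) (ENNReal.ofReal_le_ofReal ?_)
            exact mul_le_mul_of_nonneg_left
              (Real.rpow_le_rpow_of_nonpos (by positivity) hB hexpneg) hc₂.le
          have hyu : ‖y‖ < r := by linarith
          have h1 : u₁ y ≤ ENNReal.ofReal c₂ *
              (closedBall (0:EuclideanSpace ℝ (Fin d)) (2*n)).indicator
                (fun y => ENNReal.ofReal (‖y‖ ^ (-(d:ℝ)/2))) y := by
            rw [Set.indicator_of_mem (mem_closedBall_zero_iff.2 hG),
              ← ENNReal.ofReal_mul hc₂.le]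
            exact (hnear _ hy0 hyu).2
          calc u₁ (x - y) * u₁ y ≤ ENNReal.ofReal (c₂ * (n/2) ^ (-(d:ℝ)/2)) *
              (ENNReal.ofReal c₂ *
                (closedBall (0:EuclideanSpace ℝ (Fin d)) (2*n)).indicator
                  (fun y => ENNReal.ofReal (‖y‖ ^ (-(d:ℝ)/2))) y) := mul_le_mul' h2 h1
            _ = FG y := by simp only [hFGdef]
            _ ≤ FG y + (FB y + (FC y + FD y)) := le_self_add
        · push_neg at hG
          by_cases hCc : ‖y‖ ≤ R
          · -- C region
            have hy0' : (0:ℝ) < ‖y‖ := by linarith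
            have hxylow : ‖y‖/2 ≤ ‖x - y‖ := by linarith
            have hxyr : ‖x - y‖ < r := by linarith
            have hxy0 : x - y ≠ 0 := norm_pos_iff.1 (by linarith)
            have h2 : u₁ (x - y) ≤ ENNReal.ofReal (c₂ * (‖y‖/2) ^ (-(d:ℝ)/2)) := by
              refine le_trans ((hnear _ hxy0 hxyr).2) (ENNReal.ofReal_le_ofReal ?_)
              exact mul_le_mul_of_nonneg_left
                (Real.rpow_le_rpow_of_nonpos (by positivity) hxylow hexpneg) hc₂.le
            have hyu : ‖y‖ < r := by linarith
            have h1 : u₁ y ≤ ENNReal.ofReal (c₂ * ‖y‖ ^ (-(d:ℝ)/2)) := (hnear _ hy0 hyu).2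
            have hkey : (c₂ * (‖y‖/2) ^ (-(d:ℝ)/2)) * (c₂ * ‖y‖ ^ (-(d:ℝ)/2))
                = c₂^2 * (2:ℝ)^((d:ℝ)/2) * ‖y‖ ^ (-(d:ℝ)) := by
              have hhalf : (‖y‖/2) ^ (-(d:ℝ)/2)
                  = ‖y‖ ^ (-(d:ℝ)/2) * (2:ℝ)^((d:ℝ)/2) := by
                rw [Real.div_rpow (norm_nonneg y) (by norm_num : (0:ℝ) ≤ 2), div_eq_mul_inv,
                  ← Real.rpow_neg (by norm_num : (0:ℝ) ≤ 2)]
                congr 1; ring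
              rw [hhalf, ← hrpow2 ‖y‖ hy0']
              ring
            calc u₁ (x - y) * u₁ y
                ≤ ENNReal.ofReal (c₂ * (‖y‖/2) ^ (-(d:ℝ)/2)) *
                  ENNReal.ofReal (c₂ * ‖y‖ ^ (-(d:ℝ)/2)) := mul_le_mul' h2 h1
              _ = ENNReal.ofReal (c₂^2 * (2:ℝ)^((d:ℝ)/2) * ‖y‖ ^ (-(d:ℝ))) := by
                  rw [← ENNReal.ofReal_mul (by positivity), hkey]
              _ = FC y := by
                  simp only [hFCdef]
                  rw [Set.indicator_of_mem (show y ∈ S from ⟨hG.le, hCc⟩),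
                    ← ENNReal.ofReal_mul (by positivity)]
              _ ≤ FC y + FD y := le_self_add
              _ ≤ FB y + (FC y + FD y) := le_add_self
              _ ≤ FG y + (FB y + (FC y + FD y)) := le_add_self
          · -- D region
            push_neg at hCc
            have hxyD : R/2 ≤ ‖x - y‖ := by linarith
            have h2 : u₁ (x - y) ≤ ENNReal.ofReal M₀ := by
              by_cases hxyr : ‖x - y‖ < r
              · have hxy0 : x - y ≠ 0 := norm_pos_iff.1 (by linarith)
                refine le_trans ((hnear _ hxy0 hxyr).2) (ENNReal.ofReal_le_ofReal ?_)
                refine le_trans ?_ (le_max_left _ C)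
                exact mul_le_mul_of_nonneg_left
                  (Real.rpow_le_rpow_of_nonpos (by positivity) hxyD hexpneg) hc₂.le
              · push_neg at hxyr
                refine le_trans (hfar _ hxyr) (ENNReal.ofReal_le_ofReal ?_)
                refine le_trans ?_ (le_max_right _ _)
                calc C * Real.exp (-c * ‖x - y‖) ≤ C * 1 := by
                      apply mul_le_mul_of_nonneg_left _ hC.le
                      rw [Real.exp_le_one_iff, neg_mul, neg_nonpos]
                      positivity
                  _ = C := mul_one C
            have h1 : ({y : EuclideanSpace ℝ (Fin d) | R ≤ ‖y‖}).indicator u₁ y = u₁ y :=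
              Set.indicator_of_mem (show y ∈ {y : EuclideanSpace ℝ (Fin d) | R ≤ ‖y‖}
                from hCc.le) u₁
            calc u₁ (x - y) * u₁ y ≤ ENNReal.ofReal M₀ * u₁ y := mul_le_mul' h2 le_rfl
              _ = FD y := by simp only [hFDdef]; rw [h1]
              _ ≤ FC y + FD y := le_add_self
              _ ≤ FB y + (FC y + FD y) := le_add_self
              _ ≤ FG y + (FB y + (FC y + FD y)) := le_add_self
    have h0 : ∀ᵐ y : EuclideanSpace ℝ (Fin d), y ≠ 0 := by
      rw [ae_iff]
      have hs : {y : EuclideanSpace ℝ (Fin d) | ¬ y ≠ 0} = {(0 : EuclideanSpace ℝ (Fin d))} := by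
        ext y; simp
      rw [hs]; exact measure_singleton 0
    have hX : ∀ᵐ y : EuclideanSpace ℝ (Fin d), y ≠ x := by
      rw [ae_iff]
      have hs : {y : EuclideanSpace ℝ (Fin d) | ¬ y ≠ x} = {x} := by ext y; simp
      rw [hs]; exact measure_singleton x
    have hae : ∀ᵐ y : EuclideanSpace ℝ (Fin d),
        u₁ (x - y) * u₁ y ≤ FG y + (FB y + (FC y + FD y)) := by
      filter_upwards [h0, hX] with y hy0 hyx using hpt y hy0 hyx
    have hsplit : ∫⁻ y, (FG y + (FB y + (FC y + FD y)))
        = (∫⁻ y, FG y) + ((∫⁻ y, FB y) + ((∫⁻ y, FC y) + (∫⁻ y, FD y))) := by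
      rw [lintegral_add_left hFGm, lintegral_add_left hFBm, lintegral_add_left hFCm]
    -- compute the four integrals
    have hIG : ∫⁻ y, FG y ≤ ENNReal.ofReal KG := by
      simp only [hFGdef]
      rw [lintegral_const_mul' _ _ ENNReal.ofReal_ne_top,
        lintegral_const_mul' _ _ ENNReal.ofReal_ne_top,
        LogKernelAux.ball_lintegral d hd (2*n) (by linarith), hkap,
        ← ENNReal.ofReal_mul hkR.le, ← ENNReal.ofReal_mul hc₂.le,
        ← ENNReal.ofReal_mul (by positivity)]
      apply ENNReal.ofReal_le_ofReal
      have hid : (n/2) ^ (-(d:ℝ)/2) * (2*n) ^ ((d:ℝ)/2) = 4 ^ ((d:ℝ)/2) := by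
        have h1 : (n/2 : ℝ) ^ (-(d:ℝ)/2) = ((n/2) ^ ((d:ℝ)/2))⁻¹ := by
          rw [← Real.rpow_neg (by positivity)]; congr 1; ring
        have h2 : ((2*n : ℝ)/(n/2)) ^ ((d:ℝ)/2) = (2*n) ^ ((d:ℝ)/2) / (n/2) ^ ((d:ℝ)/2) :=
          Real.div_rpow (by positivity) (by positivity) _
        have h3 : ((2*n : ℝ)/(n/2)) = 4 := by field_simp; ring
        rw [h1, mul_comm, ← div_eq_mul_inv, ← h2, h3]
      calc c₂ * (n/2) ^ (-(d:ℝ)/2) * (c₂ * (kR * ((2*n) ^ ((d:ℝ)/2) * (2/(d:ℝ)))))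
          = c₂^2 * kR * (2/(d:ℝ)) * ((n/2) ^ (-(d:ℝ)/2) * (2*n) ^ ((d:ℝ)/2)) := by ring
        _ = KG := by rw [hid, hKGdef]
        _ ≤ KG := le_rfl
    have hIB : ∫⁻ y, FB y ≤ ENNReal.ofReal KB := by
      simp only [hFBdef]
      have hinner : ∫⁻ y, ENNReal.ofReal c₂ *
          (closedBall (0:EuclideanSpace ℝ (Fin d)) (n/2)).indicator
            (fun z => ENNReal.ofReal (‖z‖ ^ (-(d:ℝ)/2))) (x - y)
          = ENNReal.ofReal c₂ * (LogKernelAux.kap d *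
            ENNReal.ofReal ((n/2) ^ ((d:ℝ)/2) * (2/(d:ℝ)))) := by
        rw [lintegral_const_mul' _ _ ENNReal.ofReal_ne_top]
        congr 1
        rw [LogKernelAux.lintegral_comp_sub d
          ((closedBall (0:EuclideanSpace ℝ (Fin d)) (n/2)).indicator
            (fun z => ENNReal.ofReal (‖z‖ ^ (-(d:ℝ)/2))))
          (Measurable.indicator (by fun_prop) measurableSet_closedBall) x]
        exact LogKernelAux.ball_lintegral d hd (n/2) (by positivity)
      rw [lintegral_const_mul' _ _ ENNReal.ofReal_ne_top, hinner, hkap,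
        ← ENNReal.ofReal_mul hkR.le, ← ENNReal.ofReal_mul hc₂.le,
        ← ENNReal.ofReal_mul (by positivity)]
      apply ENNReal.ofReal_le_ofReal
      have hid : (n/2) ^ (-(d:ℝ)/2) * (n/2) ^ ((d:ℝ)/2) = 1 := by
        rw [← Real.rpow_add (by positivity : (0:ℝ) < n/2)]
        have he : -(d:ℝ)/2 + (d:ℝ)/2 = 0 := by ring
        rw [he, Real.rpow_zero]
      calc c₂ * (n/2) ^ (-(d:ℝ)/2) * (c₂ * (kR * ((n/2) ^ ((d:ℝ)/2) * (2/(d:ℝ)))))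
          = c₂^2 * kR * (2/(d:ℝ)) * ((n/2) ^ (-(d:ℝ)/2) * (n/2) ^ ((d:ℝ)/2)) := by ring
        _ = KB := by rw [hid, hKBdef]; ring
        _ ≤ KB := le_rfl
    have hIC : ∫⁻ y, FC y ≤ ENNReal.ofReal (KC * (-Real.log n)) := by
      simp only [hFCdef]
      rw [lintegral_const_mul' _ _ ENNReal.ofReal_ne_top, hSdef,
        LogKernelAux.annulus_lintegral d hd (2*n) R (by linarith) h2nR, hkap,
        ← ENNReal.ofReal_mul hkR.le, ← ENNReal.ofReal_mul (by positivity)]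
      apply ENNReal.ofReal_le_ofReal
      have hlogR : Real.log R ≤ 0 := Real.log_nonpos hR.le (by linarith)
      have hlog2 : 0 ≤ Real.log 2 := Real.log_nonneg one_le_two
      have hkey : Real.log R - Real.log (2*n) ≤ -Real.log n := by
        rw [hlogeq]; linarith
      calc c₂^2 * (2:ℝ)^((d:ℝ)/2) * (kR * (Real.log R - Real.log (2*n)))
          ≤ c₂^2 * (2:ℝ)^((d:ℝ)/2) * (kR * (-Real.log n)) := by
            apply mul_le_mul_of_nonneg_left _ (by positivity)
            exact mul_le_mul_of_nonneg_left hkey hkR.le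
        _ = KC * (-Real.log n) := by rw [hKCdef]; ring
    have hID : ∫⁻ y, FD y ≤ ENNReal.ofReal (M₀ * Tf) := by
      simp only [hFDdef]
      rw [lintegral_const_mul' _ _ ENNReal.ofReal_ne_top, hTfeq,
        ← ENNReal.ofReal_mul hM0]
    calc ∫⁻ y, u₁ (x - y) * u₁ y
        ≤ ∫⁻ y, (FG y + (FB y + (FC y + FD y))) := lintegral_mono_ae hae
      _ = (∫⁻ y, FG y) + ((∫⁻ y, FB y) + ((∫⁻ y, FC y) + (∫⁻ y, FD y))) := hsplit
      _ ≤ ENNReal.ofReal KG + (ENNReal.ofReal KB +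
          (ENNReal.ofReal (KC * (-Real.log n)) + ENNReal.ofReal (M₀ * Tf))) := by
          gcongr
      _ = ENNReal.ofReal (KG + (KB + (KC * (-Real.log n) + M₀ * Tf))) := by
          rw [← ENNReal.ofReal_add (by positivity) (mul_nonneg hM0 hTf0),
            ← ENNReal.ofReal_add hKB0 (by positivity),
            ← ENNReal.ofReal_add hKG0 (by positivity)]
      _ ≤ ENNReal.ofReal ((KG + KB + M₀*Tf + KC + 1) * (-Real.log n)) := by
          apply ENNReal.ofReal_le_ofReal
          nlinarith [mul_nonneg hM0 hTf0, mul_nonneg hKC0 (by linarith : (0:ℝ) ≤ -Real.log n)]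
end
end
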